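/- Let G = (Q, T) be a strongly connected d-VASS and θ a simple cycle in G that is not a self-loop. Then the VASS G/θ obtained by shrinking θ to a single state (with transition effects adjusted by the shift function s) satisfies Cyc(G/θ) = Cyc(G). -/

import Mathlib

/-- A `d`-dimensional vector addition system with states: a type of states and a
set of transitions labelled by integer vectors. -/
structure VASS (d : ℕ) where
  Q : Type
  T : Set (Q × (Fin d → ℤ) × Q)

namespace VASS

variable {d : ℕ} (G : VASS d)

/-- Paths in a VASS, viewed as a labelled directed graph. -/
inductive Path : G.Q → G.Q → Type
  | nil (p : G.Q) : Path p p
  | cons {p q r : G.Q} (a : Fin d → ℤ) (h : (p, a, q) ∈ G.T) (rest : Path q r) :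
      Path p r

variable {G}

/-- The effect of a path: the sum of its transition labels. -/
def Path.eff : ∀ {p q : G.Q}, G.Path p q → (Fin d → ℤ)
  | _, _, .nil _ => 0
  | _, _, .cons a _ rest => a + rest.eff

/-- The length (number of transitions) of a path. -/
def Path.length : ∀ {p q : G.Q}, G.Path p q → ℕ
  | _, _, .nil _ => 0
  | _, _, .cons _ _ rest => rest.length + 1

/-- The list of states visited by a path (including both endpoints). -/
def Path.states : ∀ {p q : G.Q}, G.Path p q → List G.Q
  | p, _, .nil _ => [p]
  | p, _, .cons _ _ rest => p :: rest.states

/-- Concatenation of paths. -/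
def Path.append : ∀ {p q r : G.Q}, G.Path p q → G.Path q r → G.Path p r
  | _, _, _, .nil _, ρ => ρ
  | _, _, _, .cons a h rest, ρ => .cons a h (rest.append ρ)

/-- A path is admissible from the vector `u` if all intermediate configurations
(including source and target) are nonnegative. -/
def Path.Admissible : ∀ {p q : G.Q}, G.Path p q → (Fin d → ℤ) → Prop
  | _, _, .nil _, u => ∀ i, 0 ≤ u i
  | _, _, .cons a _ rest, u => (∀ i, 0 ≤ u i) ∧ rest.Admissible (u + a)

/-- The list of configurations of the run induced by a path from the vector `u`. -/
def Path.configs : ∀ {p q : G.Q}, G.Path p q → (Fin d → ℤ) → List (G.Q × (Fin d → ℤ))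
  | p, _, .nil _, u => [(p, u)]
  | p, _, .cons a _ rest, u => (p, u) :: rest.configs (u + a)

/-- Reachability: `p(u) →* q(v)`. -/
def Reaches (G : VASS d) (p : G.Q) (u : Fin d → ℤ) (q : G.Q) (v : Fin d → ℤ) : Prop :=
  ∃ π : G.Path p q, π.Admissible u ∧ v = u + π.eff

/-- The set of (rationalized) effects of cycles of `G`. -/
def cycEffects (G : VASS d) : Set (Fin d → ℚ) :=
  {v | ∃ (p : G.Q) (π : G.Path p p), v = fun i => ((π.eff i : ℚ))}

/-- The cycle space `Cyc(G)`: the span of all cycle effects. -/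
def cycSpace (G : VASS d) : Submodule ℚ (Fin d → ℚ) :=
  Submodule.span ℚ (cycEffects G)

/-- The traversal number `ς(G)`: the maximal number of distinct states visited
by a path of `G`. -/
noncomputable def travNum (G : VASS d) : ℕ :=
  letI := Classical.decEq G.Q
  sSup {n | ∃ (p q : G.Q) (π : G.Path p q), n = π.states.toFinset.card}

/-- The maximal norm `‖T‖` of a transition of `G`. -/
noncomputable def normT (G : VASS d) : ℕ :=
  sSup {n | ∃ t ∈ G.T, ∃ i, n = (t.2.1 i).natAbs}

/-- The characteristic `χ(G) = ς(G)·‖T‖`. -/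
noncomputable def char (G : VASS d) : ℕ := travNum G * normT G

end VASS

namespace VASS

variable {d : ℕ} {G : VASS d}

theorem Path.eff_append : ∀ {p q r : G.Q} (π : G.Path p q) (ρ : G.Path q r),
    (π.append ρ).eff = π.eff + ρ.eff
  | _, _, _, .nil _, ρ => by simp [Path.append, Path.eff]
  | _, _, _, .cons a h rest, ρ => by
      simp only [Path.append, Path.eff, Path.eff_append rest ρ]; abel

theorem Path.start_mem_states : ∀ {p q : G.Q} (π : G.Path p q), p ∈ π.states
  | _, _, .nil _ => by simp [Path.states]
  | _, _, .cons _ _ _ => by simp [Path.states]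

theorem Path.split_at {x : G.Q} : ∀ {p r : G.Q} (π : G.Path p r), x ∈ π.states →
    ∃ (π₁ : G.Path p x) (π₂ : G.Path x r), π₁.append π₂ = π
  | _, _, .nil p, hx => by
      simp only [Path.states, List.mem_singleton] at hx
      subst hx; exact ⟨.nil _, .nil _, rfl⟩
  | p, r, .cons a h rest, hx => by
      rcases (by simpa [Path.states] using hx : x = p ∨ x ∈ rest.states) with h1 | h2
      · subst h1; exact ⟨.nil _, .cons a h rest, rfl⟩
      · obtain ⟨ρ₁, ρ₂, hρ⟩ := Path.split_at rest h2
        exact ⟨.cons a h ρ₁, ρ₂, by simp [Path.append, hρ]⟩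

/-- The shrunk VASS `G/θ`. -/
def shrink (G : VASS d) [DecidableEq G.Q] (p₀ : G.Q) (θ : G.Path p₀ p₀)
    (s : G.Q → (Fin d → ℤ)) : VASS d where
  Q := G.Q
  T := {tr | ∃ p a q, (p, a, q) ∈ G.T ∧
          tr = ((if p ∈ θ.states then p₀ else p), s p + a - s q,
                (if q ∈ θ.states then p₀ else q))}

variable [DecidableEq G.Q] {p₀ : G.Q} {θ : G.Path p₀ p₀} {s : G.Q → (Fin d → ℤ)}

theorem shrink_map {p q : G.Q} (π : G.Path p q) :
    ∃ π' : (shrink G p₀ θ s).Path (if p ∈ θ.states then p₀ else p)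
      (if q ∈ θ.states then p₀ else q), π'.eff = s p + π.eff - s q := by
  induction π with
  | nil z => exact ⟨.nil _, by simp [Path.eff]⟩
  | cons a hmem rest ih =>
      rename_i p m r
      obtain ⟨rest', hrest'⟩ := ih
      refine ⟨.cons (s p + a - s m) ⟨p, a, m, hmem, rfl⟩ rest', ?_⟩
      simp only [Path.eff]; erw [hrest']; abel

theorem fiber_connect
    (hs : ∀ (q : G.Q) (π₁ : G.Path p₀ q) (π₂ : G.Path q p₀),
      π₁.append π₂ = θ → s q = π₁.eff)
    {p q : G.Q}
    (hpq : (if p ∈ θ.states then p₀ else p) = (if q ∈ θ.states then p₀ else q)) :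
    ∃ (σ : G.Path p q) (j : ℕ), σ.eff = s q - s p + j • θ.eff := by
  by_cases hp : p ∈ θ.states <;> by_cases hq : q ∈ θ.states <;>
    simp only [hp, hq, if_pos, if_neg, if_true, if_false] at hpq
  · obtain ⟨α, β, hαβ⟩ := Path.split_at θ hp
    obtain ⟨γ, δ, hγδ⟩ := Path.split_at θ hq
    have hsp : s p = α.eff := hs p α β hαβ
    have hsq : s q = γ.eff := hs q γ δ hγδ
    have hθ : θ.eff = α.eff + β.eff := by rw [← hαβ, Path.eff_append]
    refine ⟨β.append γ, 1, ?_⟩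
    rw [Path.eff_append, hsp, hsq, hθ, one_smul]; abel
  · exact absurd (hpq ▸ Path.start_mem_states θ) hq
  · exact absurd (hpq.symm ▸ Path.start_mem_states θ) hp
  · subst hpq; exact ⟨.nil _, 0, by simp [Path.eff]⟩

theorem shrink_lift
    (hs : ∀ (q : G.Q) (π₁ : G.Path p₀ q) (π₂ : G.Path q p₀),
      π₁.append π₂ = θ → s q = π₁.eff)
    {x y : (shrink G p₀ θ s).Q} (π' : (shrink G p₀ θ s).Path x y) :
    ∀ (p : G.Q), (if p ∈ θ.states then p₀ else p) = x →
    ∃ (q : G.Q), (if q ∈ θ.states then p₀ else q) = y ∧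
      ∃ (ρ : G.Path p q) (k : ℕ), ρ.eff + s p = π'.eff + s q + k • θ.eff := by
  induction π' with
  | nil z => exact fun p hp => ⟨p, hp, .nil _, 0, by simp [Path.eff]⟩
  | cons b hb rest ih =>
      rename_i x m y
      intro p hp
      obtain ⟨p₁, a, q₁, hmem, heq⟩ := hb
      replace heq : x = _ ∧ b = _ ∧ m = _ :=
        ⟨congrArg Prod.fst heq, congrArg (fun t => t.2.1) heq, congrArg (fun t => t.2.2) heq⟩
      obtain ⟨hx, hbEq, hm⟩ := heq
      obtain ⟨σ, j, hσ⟩ := fiber_connect hs (p := p) (q := p₁) (hp.trans hx)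
      obtain ⟨q, hq, ρ, k, hρ⟩ := ih q₁ hm.symm
      refine ⟨q, hq, σ.append (.cons a hmem ρ), j + k, ?_⟩
      have hρ' : ρ.eff = rest.eff + s q + k • θ.eff - s q₁ := by
        rw [← hρ]; abel
      rw [Path.eff_append, hσ]
      simp only [Path.eff]
      rw [hbEq, hρ', add_nsmul]
      generalize j • θ.eff = u
      generalize k • θ.eff = v
      simp only [sub_eq_add_neg]
      abel

theorem shrink_cycSpace
    (hs : ∀ (q : G.Q) (π₁ : G.Path p₀ q) (π₂ : G.Path q p₀),
      π₁.append π₂ = θ → s q = π₁.eff) :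
    (shrink G p₀ θ s).cycSpace = G.cycSpace := by
  apply le_antisymm
  · rw [cycSpace, Submodule.span_le]
    rintro v ⟨p', π', rfl⟩
    rcases π' with _ | ⟨b, hb, rest⟩
    · have : (fun i => ((Path.eff (G := shrink G p₀ θ s) (.nil p') i : ℤ) : ℚ))
          = (0 : Fin d → ℚ) := by funext i; simp [Path.eff]
      rw [SetLike.mem_coe, this]; exact Submodule.zero_mem _
    · rename_i m
      have hb' := hb
      obtain ⟨p₁, a, q₁, hmem, heq⟩ := hb'
      have hx : (if p₁ ∈ θ.states then p₀ else p₁) = p' :=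
        (congrArg Prod.fst heq).symm
      obtain ⟨q, hq, ρ, k, hρ⟩ := shrink_lift hs (.cons b hb rest) p₁ hx
      obtain ⟨σ, j, hσ⟩ := fiber_connect hs (p := q) (q := p₁) (hq.trans hx.symm)
      have hcyc : (ρ.append σ).eff
          = (Path.cons b hb rest).eff + (k + j) • θ.eff := by
        have hρ' : ρ.eff = (Path.cons b hb rest).eff + s q + k • θ.eff - s p₁ := by
          rw [← hρ]; abel
        rw [Path.eff_append, hσ, hρ', add_nsmul]
        generalize j • θ.eff = u
        generalize k • θ.eff = v
        abel
      have hval : (fun i => (((Path.cons b hb rest).eff i : ℤ) : ℚ))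
          = (fun i => (((ρ.append σ).eff i : ℤ) : ℚ))
            - ((k + j : ℕ) : ℚ) • (fun i => ((θ.eff i : ℤ) : ℚ)) := by
        funext i
        have h := congrFun hcyc i
        simp only [Pi.add_apply, Pi.smul_apply] at h
        rw [nsmul_eq_mul] at h
        have h2 : (Path.cons b hb rest).eff i
            = (ρ.append σ).eff i - ((k + j : ℕ) : ℤ) * θ.eff i := by rw [h]; ring
        simp only [Pi.sub_apply, Pi.smul_apply, smul_eq_mul]
        rw [h2]; push_cast; ring
      rw [SetLike.mem_coe, hval]
      exact sub_mem (Submodule.subset_span ⟨p₁, ρ.append σ, rfl⟩)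
        (Submodule.smul_mem _ _ (Submodule.subset_span ⟨p₀, θ, rfl⟩))
  · apply Submodule.span_mono
    rintro v ⟨p, π, rfl⟩
    obtain ⟨π', hπ'⟩ := shrink_map (p₀ := p₀) (s := s) π
    exact ⟨_, π', by funext i; rw [hπ']; simp⟩

end VASS

/-- Cycle shrinking preserves the cycle space. The shrunk VASS
`G/θ` identifies all states on the simple (non-self-loop) cycle `θ` with its
base point `p₀` and adjusts transition effects by the shift function `s`. -/
theorem stmt10 {d : ℕ} (G : VASS d) [DecidableEq G.Q]
    (hconn : ∀ p q : G.Q, Nonempty (G.Path p q))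
    (p₀ : G.Q) (θ : G.Path p₀ p₀)
    (hsimple : θ.states.dropLast.Nodup)
    (hlen : 2 ≤ θ.length)
    (s : G.Q → (Fin d → ℤ))
    (hs0 : ∀ q, q ∉ θ.states → s q = 0)
    (hs : ∀ (q : G.Q) (π₁ : G.Path p₀ q) (π₂ : G.Path q p₀),
      π₁.append π₂ = θ → s q = π₁.eff) :
    VASS.cycSpace
      { Q := G.Q
        T := {tr | ∃ p a q, (p, a, q) ∈ G.T ∧
          tr = ((if p ∈ θ.states then p₀ else p), s p + a - s q,
                (if q ∈ θ.states then p₀ else q))} }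
      = VASS.cycSpace G := by
  exact VASS.shrink_cycSpace hs
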